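/- Suppose ∇g is Lipschitz continuous on X with constant L_g > 0. Then for every initial point (x0, y0) ∈ X × X there exists a unique continuously differentiable pair (x, y) : [t0, ∞) → X × X with x(t0) = x0, y(t0) = y0 satisfying, for all t ≥ t0, the first-order system x'(t) = y(t) − β ∇g(x(t)) and y'(t) = −(α/t^q) y(t) − (δ(t) − βα/t^q) ∇g(x(t)) − (a/t^p) x(t), i.e., the system (DS) admits a unique strong global solution for every initial condition. -/

import Mathlib

open Filter Set
open scoped Topology NNReal

set_option maxHeartbeats 1000000
set_option linter.unusedSectionVars false

section MyGeneral
variable {E : Type*} [NormedAddCommGroup E] [NormedSpace ℝ E] [CompleteSpace E]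

lemma my_ode_unique_Icc (F : ℝ → E → E) (t0 T : ℝ) (K : ℝ≥0)
    (hK : ∀ t ∈ Icc t0 T, LipschitzWith K (F t))
    (f g : ℝ → E) (hf0 : f t0 = g t0)
    (hf : ∀ t ∈ Icc t0 T, HasDerivWithinAt f (F t (f t)) (Icc t0 T) t)
    (hg : ∀ t ∈ Icc t0 T, HasDerivWithinAt g (F t (g t)) (Icc t0 T) t) :
    EqOn f g (Icc t0 T) := by
  rcases le_or_gt t0 T with hT | hT
  · set v : ℝ → E → E := fun t => F (min (max t t0) T) with hv_def
    have hmem : ∀ t : ℝ, min (max t t0) T ∈ Icc t0 T := fun t =>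
      ⟨le_min (le_max_right _ _) hT, min_le_right _ _⟩
    have hv : ∀ t, LipschitzOnWith K (v t) ((fun _ => (univ : Set E)) t) := fun t =>
      ((hK _ (hmem t))).lipschitzOnWith
    have hveq : ∀ t ∈ Icc t0 T, v t = F t := by
      intro t ht
      simp only [hv_def, max_eq_left ht.1, min_eq_left ht.2]
    have hnhds : ∀ t ∈ Ico t0 T, Icc t0 T ∈ 𝓝[Ici t] t := by
      intro t ht
      refine mem_nhdsWithin.mpr ⟨Iio T, isOpen_Iio, ht.2, ?_⟩
      rintro y ⟨hy1, hy2⟩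
      exact ⟨ht.1.trans hy2, le_of_lt hy1⟩
    have hcf : ContinuousOn f (Icc t0 T) := fun t ht => (hf t ht).continuousWithinAt
    have hcg : ContinuousOn g (Icc t0 T) := fun t ht => (hg t ht).continuousWithinAt
    refine ODE_solution_unique_of_mem_Icc_right (v := v) (s := fun _ => univ) (fun t _ => hv t) hcf ?_
      (fun _ _ => trivial) hcg ?_ (fun _ _ => trivial) hf0
    · intro t ht
      rw [hveq t (Ico_subset_Icc_self ht)]
      exact (hf t (Ico_subset_Icc_self ht)).mono_of_mem_nhdsWithin (hnhds t ht)
    · intro t ht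
      rw [hveq t (Ico_subset_Icc_self ht)]
      exact (hg t (Ico_subset_Icc_self ht)).mono_of_mem_nhdsWithin (hnhds t ht)
  · intro t ht
    exact absurd (ht.1.trans ht.2) (not_le.2 hT)

lemma my_hasDerivWithinAt_bot {f : ℝ → E} {v : E} {s : Set ℝ} {x : ℝ}
    (h : 𝓝[s \ {x}] x = ⊥) : HasDerivWithinAt f v s x :=
  HasFDerivWithinAt.of_not_accPt (by rw [accPt_principal_iff_nhdsWithin, not_neBot]; exact h)

lemma my_hasDerivWithinAt_singleton (f : ℝ → E) (v : E) (x : ℝ) :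
    HasDerivWithinAt f v {x} x :=
  my_hasDerivWithinAt_bot (by rw [diff_self, nhdsWithin_empty])

lemma my_hasDerivWithinAt_of_nmem_closure {f : ℝ → E} {v : E} {s : Set ℝ} {x : ℝ}
    (h : x ∉ closure s) : HasDerivWithinAt f v s x :=
  HasFDerivWithinAt.of_notMem_closure h

lemma my_ode_exists_Icc (F : ℝ → E → E) (t0 T : ℝ) (hT : t0 ≤ T) (K : ℝ≥0)
    (hK : ∀ t ∈ Icc t0 T, LipschitzWith K (F t))
    (hcont : ∀ u : E, ContinuousOn (fun t => F t u) (Icc t0 T))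
    (u0 : E) :
    ∃ f : ℝ → E, f t0 = u0 ∧ ∀ t ∈ Icc t0 T, HasDerivWithinAt f (F t (f t)) (Icc t0 T) t := by
  -- bound on ‖F t 0‖
  obtain ⟨M0, hM0⟩ : ∃ M0, ∀ t ∈ Icc t0 T, ‖F t 0‖ ≤ M0 :=
    isCompact_Icc.exists_bound_of_continuousOn (hcont 0)
  set M : ℝ := max M0 0 with hM_def
  have hMnn : 0 ≤ M := le_max_right _ _
  have hM : ∀ t ∈ Icc t0 T, ‖F t 0‖ ≤ M := fun t ht => (hM0 t ht).trans (le_max_left _ _)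
  set h : ℝ := (2 * (K : ℝ) + 1)⁻¹ with hh_def
  have hKnn : (0:ℝ) ≤ K := K.coe_nonneg
  have hh : 0 < h := by positivity
  have hmul : h * (2 * (K : ℝ) + 1) = 1 := by
    rw [hh_def]; field_simp
  -- inductive construction
  have key : ∀ n : ℕ, ∃ f : ℝ → E, f t0 = u0 ∧
      ∀ t ∈ Icc t0 (min (t0 + n * h) T),
        HasDerivWithinAt f (F t (f t)) (Icc t0 (min (t0 + n * h) T)) t := by
    intro n
    induction n with
    | zero =>
      refine ⟨fun _ => u0, rfl, ?_⟩
      have : min (t0 + (0:ℕ) * h) T = t0 := by simp [hT]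
      rw [this, Icc_self]
      intro t ht
      rw [mem_singleton_iff] at ht
      subst ht
      exact my_hasDerivWithinAt_singleton _ _ _
    | succ n ih =>
      obtain ⟨f, hf0, hfD⟩ := ih
      have hnh : (0:ℝ) ≤ n * h := by positivity
      rcases le_or_gt T (t0 + n * h) with hTn | hTn
      · have h1 : min (t0 + n * h) T = T := min_eq_right hTn
        have h2 : min (t0 + (n + 1 : ℕ) * h) T = T := by
          refine min_eq_right (hTn.trans ?_)
          have : (n:ℝ) * h ≤ (n+1:ℕ) * h := by
            push_cast; nlinarith
          linarith
        refine ⟨f, hf0, ?_⟩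
        rw [h2]; rw [h1] at hfD; exact hfD
      · set s : ℝ := t0 + n * h with hs_def
        have hbn : min (t0 + n * h) T = s := min_eq_left hTn.le
        have ht0s : t0 ≤ s := by linarith
        set b' : ℝ := min (s + h) T with hb'_def
        have hsb' : s ≤ b' := le_min (by linarith) hTn.le
        have hb'T : b' ≤ T := min_le_right _ _
        have hb'eq : min (t0 + (n + 1 : ℕ) * h) T = b' := by
          rw [hb'_def, hs_def]; push_cast; ring_nf
        have hsub : Icc s b' ⊆ Icc t0 T := Icc_subset_Icc ht0s hb'T
        rw [hbn] at hfD
        set w : E := f s with hw_def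
        set R : ℝ := ‖w‖ + M + 1 with hR_def
        set C : ℝ := M + (K : ℝ) * (2 * ‖w‖ + M + 1) with hC_def
        have hwnn : (0:ℝ) ≤ ‖w‖ := norm_nonneg _
        have hR0 : 0 ≤ R := by positivity
        have hCnn : 0 ≤ C := by rw [hC_def]; positivity
        have hpl : IsPicardLindelof F (tmin := s) (tmax := b') ⟨s, le_rfl, hsb'⟩ w
            (Real.toNNReal R) 0 (Real.toNNReal C) K :=
          { lipschitzOnWith := fun t ht => (hK t (hsub ht)).lipschitzOnWith
            continuousOn := fun x _ => (hcont x).mono hsub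
            norm_le := by
              intro t ht x hx
              rw [Real.coe_toNNReal _ hCnn]
              have hxw : ‖x‖ ≤ ‖w‖ + R := by
                have h1 := mem_closedBall_iff_norm.mp hx
                rw [Real.coe_toNNReal _ hR0] at h1
                have h2 := norm_sub_norm_le x w
                linarith
              have hlip := (hK t (hsub ht)).dist_le_mul x 0
              rw [dist_eq_norm, dist_eq_norm, sub_zero] at hlip
              have h3 := norm_sub_norm_le (F t x) (F t 0)
              have h4 := hM t (hsub ht)
              rw [hC_def]
              rw [hR_def] at hxw
              nlinarith
            mul_max_le := by
              simp only [Real.coe_toNNReal _ hCnn, Real.coe_toNNReal _ hR0, NNReal.coe_zero,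
                sub_zero]
              change C * max (b' - s) (s - s) ≤ R
              have h1 : max (b' - s) (s - s) = b' - s := by
                rw [sub_self]; exact max_eq_left (by linarith)
              rw [h1]
              have h2 : b' - s ≤ h := by
                have : b' ≤ s + h := min_le_left _ _
                linarith
              calc C * (b' - s) ≤ C * h := by nlinarith
                _ ≤ R := by rw [hC_def, hR_def]; nlinarith }
        obtain ⟨g, hg0, hgD⟩ := hpl.exists_eq_forall_mem_Icc_hasDerivWithinAt₀
        replace hg0 : g s = w := hg0
        refine ⟨fun t => if t ≤ s then f t else g t, by simp [ht0s, hf0], ?_⟩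
        rw [hb'eq]
        set f' : ℝ → E := fun t => if t ≤ s then f t else g t with hf'_def
        have hfsame : ∀ y ∈ Icc t0 s, f' y = f y := fun y hy => if_pos hy.2
        have hgsame : ∀ y ∈ Icc s b', f' y = g y := by
          intro y hy
          by_cases hys : y ≤ s
          · have : y = s := le_antisymm hys hy.1
            subst this
            simp only [hf'_def, if_pos le_rfl, ← hw_def, hg0]
          · exact if_neg hys
        intro t ht
        have hA : HasDerivWithinAt f' (F t (f' t)) (Icc t0 s) t := by
          rcases le_or_gt t s with hts | hts
          · have htm : t ∈ Icc t0 s := ⟨ht.1, hts⟩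
            have := (hfD t htm).congr hfsame (hfsame t htm)
            rwa [← hfsame t htm] at this
          · refine my_hasDerivWithinAt_of_nmem_closure ?_
            rw [closure_Icc]
            exact fun hc => absurd hc.2 (not_le.2 hts)
        have hB : HasDerivWithinAt f' (F t (f' t)) (Icc s b') t := by
          rcases le_or_gt s t with hst | hst
          · have htm : t ∈ Icc s b' := ⟨hst, ht.2⟩
            have := (hgD t htm).congr hgsame (hgsame t htm)
            rwa [← hgsame t htm] at this
          · refine my_hasDerivWithinAt_of_nmem_closure ?_
            rw [closure_Icc]
            exact fun hc => absurd hc.1 (not_le.2 hst)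
        have := hA.union hB
        rwa [Icc_union_Icc_eq_Icc ht0s hsb'] at this
  -- choose n large enough
  obtain ⟨n, hn⟩ := exists_nat_ge ((T - t0) / h)
  have hTn : T ≤ t0 + n * h := by
    rw [div_le_iff₀ hh] at hn
    linarith
  obtain ⟨f, hf0, hfD⟩ := key n
  rw [min_eq_right hTn] at hfD
  exact ⟨f, hf0, hfD⟩

lemma my_ode_global (F : ℝ → E → E) (t0 : ℝ)
    (hK : ∀ T : ℝ, ∃ K : ℝ≥0, ∀ t ∈ Icc t0 T, LipschitzWith K (F t))
    (hcont : ∀ u : E, ContinuousOn (fun t => F t u) (Ici t0))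
    (u0 : E) :
    ∃ f : ℝ → E, f t0 = u0 ∧ (∀ t ∈ Ici t0, HasDerivWithinAt f (F t (f t)) (Ici t0) t) ∧
      ∀ f₂ : ℝ → E, f₂ t0 = u0 →
        (∀ t ∈ Ici t0, HasDerivWithinAt f₂ (F t (f₂ t)) (Ici t0) t) →
        ∀ t ∈ Ici t0, f₂ t = f t := by
  have hex : ∀ T : ℝ, ∃ f : ℝ → E, f t0 = u0 ∧
      ∀ t ∈ Icc t0 T, HasDerivWithinAt f (F t (f t)) (Icc t0 T) t := by
    intro T
    rcases le_or_gt t0 T with hT | hT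
    · obtain ⟨K, hKT⟩ := hK T
      exact my_ode_exists_Icc F t0 T hT K hKT
        (fun u => (hcont u).mono Icc_subset_Ici_self) u0
    · exact ⟨fun _ => u0, rfl, fun t ht => absurd (ht.1.trans ht.2) (not_le.2 hT)⟩
  choose sol hsol0 hsolD using hex
  -- consistency
  have key : ∀ T₁ T₂ t : ℝ, t ∈ Icc t0 T₁ → t ∈ Icc t0 T₂ → sol T₁ t = sol T₂ t := by
    intro T₁ T₂ t h1 h2
    obtain ⟨K, hKT⟩ := hK (min T₁ T₂)
    refine my_ode_unique_Icc F t0 (min T₁ T₂) K hKT (sol T₁) (sol T₂)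
      (by rw [hsol0 T₁, hsol0 T₂]) ?_ ?_ ⟨h1.1, le_min h1.2 h2.2⟩
    · intro τ hτ
      exact (hsolD T₁ τ ⟨hτ.1, hτ.2.trans (min_le_left _ _)⟩).mono
        (Icc_subset_Icc le_rfl (min_le_left _ _))
    · intro τ hτ
      exact (hsolD T₂ τ ⟨hτ.1, hτ.2.trans (min_le_right _ _)⟩).mono
        (Icc_subset_Icc le_rfl (min_le_right _ _))
  set f : ℝ → E := fun t => sol t t with hf_def
  have hfeq : ∀ T : ℝ, ∀ t ∈ Icc t0 T, f t = sol T t := by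
    intro T t ht
    exact key t T t ⟨ht.1, le_rfl⟩ ht
  have hf0 : f t0 = u0 := by
    have := hfeq t0 t0 ⟨le_rfl, le_rfl⟩
    rw [this, hsol0]
  have hmemn : ∀ t : ℝ, t ∈ Ici t0 → Icc t0 (t + 1) ∈ 𝓝[Ici t0] t := by
    intro t ht
    refine mem_nhdsWithin.mpr ⟨Iio (t + 1), isOpen_Iio, mem_Iio.mpr (lt_add_one t), ?_⟩
    rintro y ⟨hy1, hy2⟩
    exact ⟨hy2, le_of_lt hy1⟩
  have hfD : ∀ t ∈ Ici t0, HasDerivWithinAt f (F t (f t)) (Ici t0) t := by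
    intro t ht
    have htm : t ∈ Icc t0 (t + 1) := ⟨ht, by linarith⟩
    have h1 := hsolD (t + 1) t htm
    have h2 := h1.congr (fun y hy => hfeq (t + 1) y hy) (hfeq (t + 1) t htm)
    rw [← hfeq (t + 1) t htm] at h2
    exact h2.mono_of_mem_nhdsWithin (hmemn t ht)
  refine ⟨f, hf0, hfD, ?_⟩
  intro f₂ hf20 hf2D t ht
  obtain ⟨K, hKT⟩ := hK t
  refine my_ode_unique_Icc F t0 t K hKT f₂ f (by rw [hf20, hf0]) ?_ ?_ ⟨ht, le_rfl⟩
  · intro τ hτ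
    exact (hf2D τ hτ.1).mono Icc_subset_Ici_self
  · intro τ hτ
    exact (hfD τ hτ.1).mono Icc_subset_Ici_self


end MyGeneral

section MyApp
variable {X : Type*} [NormedAddCommGroup X] [InnerProductSpace ℝ X] [CompleteSpace X]

lemma my_lip (t0 α β a p q Lg : ℝ) (ht0 : 0 < t0) (hα : 0 < α) (hβ : 0 < β) (ha : 0 < a)
    (hp : 0 < p) (hq0 : 0 < q)
    (hLg : 0 < Lg) (g' : X → X) (hlip : ∀ u v : X, ‖g' u - g' v‖ ≤ Lg * ‖u - v‖)
    (δ : ℝ → ℝ) (hδpos : ∀ t ∈ Set.Ici t0, 0 < δ t) (hδmono : MonotoneOn δ (Set.Ici t0))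
    (T : ℝ) :
    ∃ K : ℝ≥0, ∀ t ∈ Icc t0 T, LipschitzWith K
      (fun u : X × X => (u.2 - β • g' u.1,
        -(α / t ^ q) • u.2 - (δ t - β * α / t ^ q) • g' u.1 - (a / t ^ p) • u.1)) := by
  rcases le_or_gt t0 T with hT | hT
  · have ht0q : (0:ℝ) < t0 ^ q := Real.rpow_pos_of_pos ht0 q
    have ht0p : (0:ℝ) < t0 ^ p := Real.rpow_pos_of_pos ht0 p
    have hδT : 0 < δ T := hδpos T hT
    set Kr : ℝ := (1 + β * Lg) + ((α / t0 ^ q) + (δ T + β * α / t0 ^ q) * Lg + a / t0 ^ p)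
      with hKr_def
    have hKrnn : 0 ≤ Kr := by positivity
    refine ⟨Real.toNNReal Kr, ?_⟩
    intro t ht
    have htpos : 0 < t := ht0.trans_le ht.1
    have htq0 : (0:ℝ) < t ^ q := Real.rpow_pos_of_pos htpos q
    have htp0 : (0:ℝ) < t ^ p := Real.rpow_pos_of_pos htpos p
    have hqle : t0 ^ q ≤ t ^ q := Real.rpow_le_rpow ht0.le ht.1 hq0.le
    have hple : t0 ^ p ≤ t ^ p := Real.rpow_le_rpow ht0.le ht.1 hp.le
    have hdiv1 : α / t ^ q ≤ α / t0 ^ q := by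
      rw [div_le_div_iff₀ htq0 ht0q]; nlinarith
    have hdiv2 : β * α / t ^ q ≤ β * α / t0 ^ q := by
      rw [div_le_div_iff₀ htq0 ht0q]
      exact mul_le_mul_of_nonneg_left hqle (by positivity)
    have hdiv3 : a / t ^ p ≤ a / t0 ^ p := by
      rw [div_le_div_iff₀ htp0 ht0p]; nlinarith
    have hδt : 0 < δ t := hδpos t ht.1
    have hδle : δ t ≤ δ T := hδmono ht.1 hT ht.2
    refine LipschitzWith.of_dist_le_mul ?_
    intro u v
    rw [Real.coe_toNNReal Kr hKrnn]
    have hD1 : dist u.1 v.1 ≤ dist u v := by rw [Prod.dist_eq]; exact le_max_left _ _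
    have hD2 : dist u.2 v.2 ≤ dist u v := by rw [Prod.dist_eq]; exact le_max_right _ _
    have hDnn : 0 ≤ dist u v := dist_nonneg
    set D := dist u v with hD_def
    have hDn1 : ‖u.1 - v.1‖ ≤ D := by rwa [← dist_eq_norm]
    have hDn2 : ‖u.2 - v.2‖ ≤ D := by rwa [← dist_eq_norm]
    have hg : ‖g' u.1 - g' v.1‖ ≤ Lg * D := by
      calc ‖g' u.1 - g' v.1‖ ≤ Lg * ‖u.1 - v.1‖ := hlip _ _
        _ ≤ Lg * D := by nlinarith
    rw [Prod.dist_eq]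
    refine max_le ?_ ?_
    · rw [dist_eq_norm]
      have heq : (u.2 - β • g' u.1) - (v.2 - β • g' v.1)
          = (u.2 - v.2) - β • (g' u.1 - g' v.1) := by
        rw [smul_sub]; abel
      rw [heq]
      calc ‖(u.2 - v.2) - β • (g' u.1 - g' v.1)‖
          ≤ ‖u.2 - v.2‖ + ‖β • (g' u.1 - g' v.1)‖ := norm_sub_le _ _
        _ = ‖u.2 - v.2‖ + |β| * ‖g' u.1 - g' v.1‖ := by rw [norm_smul, Real.norm_eq_abs]
        _ = ‖u.2 - v.2‖ + β * ‖g' u.1 - g' v.1‖ := by rw [abs_of_pos hβ]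
        _ ≤ D + β * (Lg * D) := by nlinarith
        _ ≤ Kr * D := by
            rw [hKr_def]
            have hS : (0:ℝ) ≤ (α / t0 ^ q + (δ T + β * α / t0 ^ q) * Lg + a / t0 ^ p) * D :=
              mul_nonneg (by positivity) hDnn
            nlinarith [hS]
    · rw [dist_eq_norm]
      have heq : (-(α / t ^ q) • u.2 - (δ t - β * α / t ^ q) • g' u.1 - (a / t ^ p) • u.1)
          - (-(α / t ^ q) • v.2 - (δ t - β * α / t ^ q) • g' v.1 - (a / t ^ p) • v.1)
          = -(α / t ^ q) • (u.2 - v.2) - (δ t - β * α / t ^ q) • (g' u.1 - g' v.1)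
            - (a / t ^ p) • (u.1 - v.1) := by
        rw [smul_sub, smul_sub, smul_sub]; abel
      rw [heq]
      have habs1 : |(-(α / t ^ q))| ≤ α / t0 ^ q := by
        rw [abs_neg, abs_of_pos (div_pos hα htq0)]; exact hdiv1
      have habs2 : |δ t - β * α / t ^ q| ≤ δ T + β * α / t0 ^ q := by
        have h3 : 0 < β * α / t ^ q := by positivity
        exact abs_le.mpr ⟨by linarith, by linarith⟩
      have habs3 : |a / t ^ p| ≤ a / t0 ^ p := by
        rw [abs_of_pos (div_pos ha htp0)]; exact hdiv3
      calc ‖-(α / t ^ q) • (u.2 - v.2) - (δ t - β * α / t ^ q) • (g' u.1 - g' v.1)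
            - (a / t ^ p) • (u.1 - v.1)‖
          ≤ ‖-(α / t ^ q) • (u.2 - v.2) - (δ t - β * α / t ^ q) • (g' u.1 - g' v.1)‖
            + ‖(a / t ^ p) • (u.1 - v.1)‖ := norm_sub_le _ _
        _ ≤ ‖-(α / t ^ q) • (u.2 - v.2)‖ + ‖(δ t - β * α / t ^ q) • (g' u.1 - g' v.1)‖
            + ‖(a / t ^ p) • (u.1 - v.1)‖ := by
            have := norm_sub_le (-(α / t ^ q) • (u.2 - v.2))
              ((δ t - β * α / t ^ q) • (g' u.1 - g' v.1))
            linarith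
        _ = |(-(α / t ^ q))| * ‖u.2 - v.2‖ + |δ t - β * α / t ^ q| * ‖g' u.1 - g' v.1‖
            + |a / t ^ p| * ‖u.1 - v.1‖ := by
            rw [norm_smul, norm_smul, norm_smul, Real.norm_eq_abs, Real.norm_eq_abs,
              Real.norm_eq_abs]
        _ ≤ (α / t0 ^ q) * D + (δ T + β * α / t0 ^ q) * (Lg * D) + (a / t0 ^ p) * D := by
            have h1 : |(-(α / t ^ q))| * ‖u.2 - v.2‖ ≤ (α / t0 ^ q) * D :=
              mul_le_mul habs1 hDn2 (norm_nonneg _) (by positivity)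
            have h2 : |δ t - β * α / t ^ q| * ‖g' u.1 - g' v.1‖
                ≤ (δ T + β * α / t0 ^ q) * (Lg * D) :=
              mul_le_mul habs2 hg (norm_nonneg _) (by positivity)
            have h3 : |a / t ^ p| * ‖u.1 - v.1‖ ≤ (a / t0 ^ p) * D :=
              mul_le_mul habs3 hDn1 (norm_nonneg _) (by positivity)
            linarith
        _ ≤ Kr * D := by
            rw [hKr_def]
            have hS : (0:ℝ) ≤ (1 + β * Lg) * D := mul_nonneg (by positivity) hDnn
            nlinarith [hS]
  · exact ⟨1, fun t htm => absurd (htm.1.trans htm.2) (not_le.2 hT)⟩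

lemma my_cont (t0 α β a p q : ℝ) (ht0 : 0 < t0)
    (g' : X → X) (δ δ' : ℝ → ℝ)
    (hδderiv : ∀ t ∈ Set.Ici t0, HasDerivWithinAt δ (δ' t) (Set.Ici t0) t)
    (u : X × X) :
    ContinuousOn (fun t : ℝ => ((u.2 - β • g' u.1 : X),
      (-(α / t ^ q) • u.2 - (δ t - β * α / t ^ q) • g' u.1 - (a / t ^ p) • u.1 : X)))
      (Ici t0) := by
  have hne : ∀ t ∈ Ici t0, t ≠ 0 := fun t ht => ne_of_gt (ht0.trans_le ht)
  have hcq : ContinuousOn (fun t : ℝ => t ^ q) (Ici t0) := fun t ht =>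
    (Real.continuousAt_rpow_const t q (Or.inl (hne t ht))).continuousWithinAt
  have hcp : ContinuousOn (fun t : ℝ => t ^ p) (Ici t0) := fun t ht =>
    (Real.continuousAt_rpow_const t p (Or.inl (hne t ht))).continuousWithinAt
  have hq_ne : ∀ t ∈ Ici t0, t ^ q ≠ 0 := fun t ht =>
    ne_of_gt (Real.rpow_pos_of_pos (ht0.trans_le ht) q)
  have hp_ne : ∀ t ∈ Ici t0, t ^ p ≠ 0 := fun t ht =>
    ne_of_gt (Real.rpow_pos_of_pos (ht0.trans_le ht) p)
  have hc1 : ContinuousOn (fun t : ℝ => α / t ^ q) (Ici t0) :=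
    continuousOn_const.div hcq hq_ne
  have hc2 : ContinuousOn (fun t : ℝ => β * α / t ^ q) (Ici t0) :=
    continuousOn_const.div hcq hq_ne
  have hc3 : ContinuousOn (fun t : ℝ => a / t ^ p) (Ici t0) :=
    continuousOn_const.div hcp hp_ne
  have hcδ : ContinuousOn δ (Ici t0) := fun t ht => (hδderiv t ht).continuousWithinAt
  refine continuousOn_const.prodMk ?_
  exact ((hc1.neg.smul continuousOn_const).sub
    ((hcδ.sub hc2).smul continuousOn_const)).sub (hc3.smul continuousOn_const)

end MyApp

/-- Theorem 2.1: existence and uniqueness of the strong global solution of the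
dynamical system (DS). If `∇g` is `L_g`-Lipschitz continuous on `X`, then for every initial
point `(x0, y0) ∈ X × X` there is a unique continuously differentiable pair
`(x, y) : [t0, ∞) → X × X` with `x t0 = x0`, `y t0 = y0` solving
`x' t = y t − β ∇g(x t)` and
`y' t = −(α/t^q) y t − (δ(t) − βα/t^q) ∇g(x t) − (a/t^p) x t` for all `t ≥ t0`. -/
theorem existence_uniqueness_DS
    {X : Type*} [NormedAddCommGroup X] [InnerProductSpace ℝ X] [CompleteSpace X]
    (t0 α β a p q Lg : ℝ) (ht0 : 0 < t0) (hα : 0 < α) (hβ : 0 < β) (ha : 0 < a)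
    (hp : 0 < p) (hq0 : 0 < q) (hq1 : q < 1) (hLg : 0 < Lg)
    (g : X → ℝ) (g' : X → X)
    (hgconv : ConvexOn ℝ Set.univ g)
    (hgrad : ∀ u : X, HasGradientAt g (g' u) u)
    (hlip : ∀ u v : X, ‖g' u - g' v‖ ≤ Lg * ‖u - v‖)
    (δ δ' : ℝ → ℝ)
    (hδpos : ∀ t ∈ Set.Ici t0, 0 < δ t)
    (hδmono : MonotoneOn δ (Set.Ici t0))
    (hδderiv : ∀ t ∈ Set.Ici t0, HasDerivWithinAt δ (δ' t) (Set.Ici t0) t)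
    (hδtop : Tendsto δ atTop atTop)
    (x0 y0 : X) :
    ∃ x y : ℝ → X,
      (x t0 = x0 ∧ y t0 = y0) ∧
      (∀ t ∈ Set.Ici t0,
        HasDerivWithinAt x (y t - β • g' (x t)) (Set.Ici t0) t) ∧
      (∀ t ∈ Set.Ici t0,
        HasDerivWithinAt y
          (-(α / t ^ q) • y t - (δ t - β * α / t ^ q) • g' (x t) - (a / t ^ p) • x t)
          (Set.Ici t0) t) ∧
      (∀ x₂ y₂ : ℝ → X,
        (x₂ t0 = x0 ∧ y₂ t0 = y0) →
        (∀ t ∈ Set.Ici t0,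
          HasDerivWithinAt x₂ (y₂ t - β • g' (x₂ t)) (Set.Ici t0) t) →
        (∀ t ∈ Set.Ici t0,
          HasDerivWithinAt y₂
            (-(α / t ^ q) • y₂ t - (δ t - β * α / t ^ q) • g' (x₂ t) - (a / t ^ p) • x₂ t)
            (Set.Ici t0) t) →
        ∀ t ∈ Set.Ici t0, x₂ t = x t ∧ y₂ t = y t) := by
  obtain ⟨f, hf0, hfD, huniq⟩ := my_ode_global
    (fun t (u : X × X) => (u.2 - β • g' u.1,
      -(α / t ^ q) • u.2 - (δ t - β * α / t ^ q) • g' u.1 - (a / t ^ p) • u.1)) t0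
    (fun T => my_lip t0 α β a p q Lg ht0 hα hβ ha hp hq0 hLg g' hlip δ hδpos hδmono T)
    (fun u => my_cont t0 α β a p q ht0 g' δ δ' hδderiv u) (x0, y0)
  refine ⟨fun t => (f t).1, fun t => (f t).2, ⟨by show (f t0).1 = x0; rw [hf0], by show (f t0).2 = y0; rw [hf0]⟩, ?_, ?_, ?_⟩
  · intro t ht
    exact (ContinuousLinearMap.fst ℝ X X).hasFDerivAt.comp_hasDerivWithinAt t (hfD t ht)
  · intro t ht
    exact (ContinuousLinearMap.snd ℝ X X).hasFDerivAt.comp_hasDerivWithinAt t (hfD t ht)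
  · rintro x₂ y₂ ⟨hx20, hy20⟩ hx2D hy2D t ht
    have h2 := huniq (fun t => (x₂ t, y₂ t)) (by show (x₂ t0, y₂ t0) = (x0, y0); rw [hx20, hy20])
      (fun τ hτ => (hx2D τ hτ).prodMk (hy2D τ hτ)) t ht
    exact ⟨congrArg Prod.fst h2, congrArg Prod.snd h2⟩
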